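/- arXiv:1601.02960 — 5 statements merged into one kernel-verified Lean document; each statement's English description precedes it below -/
import Mathlib

section
/- Let A be a square matrix of order m over a field. If |A| = 0 and A is superregular, then every term of the determinant of A is trivial; in particular, if A has nonzero entries along its main diagonal and is bordered as in the construction (i.e., A = V is the (t+1)×(t+1) matrix formed from a nonsingular t×t block with nonzero diagonal, an extra row, an extra column, and corner entry μ), then the corner entry μ must be zero. -/
/-- A matrix is superregular if every nontrivial minor is nonzero. -/
def Superregular {F : Type*} [Field F] {a b : ℕ} (B : Matrix (Fin a) (Fin b) F) : Prop :=
  ∀ (m : ℕ) (r : Fin m → Fin a) (c : Fin m → Fin b),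
    Function.Injective r → Function.Injective c →
    (∃ σ : Equiv.Perm (Fin m), ∀ i, B (r i) (c (σ i)) ≠ 0) →
    (B.submatrix r c).det ≠ 0

/-- If a superregular square matrix has zero determinant then every term of the Leibniz
expansion of its determinant is trivial; in particular, for a `(t+1)×(t+1)` matrix whose
leading `t×t` block has nonzero diagonal entries, the corner entry must be zero. -/
theorem stmt3 {F : Type*} [Field F] {t : ℕ} (A : Matrix (Fin (t + 1)) (Fin (t + 1)) F)
    (hA : Superregular A) (hdet : A.det = 0) :
    (∀ σ : Equiv.Perm (Fin (t + 1)), ∃ i, A i (σ i) = 0) ∧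
    ((∀ i : Fin t, A i.castSucc i.castSucc ≠ 0) → A (Fin.last t) (Fin.last t) = 0) := by
  have key : ∀ σ : Equiv.Perm (Fin (t + 1)), ∃ i, A i (σ i) = 0 := by
    intro σ
    by_contra h
    push_neg at h
    exact hA (t + 1) id id Function.injective_id Function.injective_id
      ⟨σ, fun i => h i⟩ (by simpa using hdet)
  refine ⟨key, ?_⟩
  intro hdiag
  by_contra hμ
  obtain ⟨i, hi⟩ := key 1
  induction i using Fin.lastCases with
  | last => exact hμ (by simpa using hi)
  | cast j => exact hdiag j (by simpa using hi)
end

section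
/- Let α be a primitive element of the finite field F = F_{p^N} and let B = [ν_{iℓ}] be a matrix over F such that: (1) every nonzero entry ν_{iℓ} equals α^{β_{iℓ}} for a positive integer β_{iℓ}; (2) if ν_{iℓ} = 0 then either ν_{i'ℓ} = 0 for all i' > i, or ν_{iℓ'} = 0 for all ℓ' < ℓ; (3) if ℓ < ℓ' and ν_{iℓ}, ν_{iℓ'} are both nonzero then 2β_{iℓ} ≤ β_{iℓ'}; (4) if i < i' and ν_{iℓ}, ν_{i'ℓ} are both nonzero then 2β_{iℓ} ≤ β_{i'ℓ}. If N is greater than every exponent of α appearing in any nontrivial term of any minor of B, then B is superregular. -/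
section Aux

variable {F : Type*} [Field F] {a b : ℕ} {α : F}

/-- Exchange step: if `π` and `τ` are two systems of nonzero entries, `i0` is the lowest row
where they differ, and `τ`'s column at `i0` is to the left of `π`'s, then `π` can be improved. -/
lemma improve_min (B : Matrix (Fin a) (Fin b) F) (β : Fin a → Fin b → ℕ)
    (h1 : ∀ i ℓ, B i ℓ ≠ 0 → B i ℓ = α ^ β i ℓ ∧ 0 < β i ℓ)
    (h2 : ∀ i ℓ, B i ℓ = 0 →
      (∀ i' : Fin a, i < i' → B i' ℓ = 0) ∨ (∀ ℓ' : Fin b, ℓ' < ℓ → B i ℓ' = 0))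
    (h3 : ∀ (i : Fin a) (ℓ ℓ' : Fin b), ℓ < ℓ' → B i ℓ ≠ 0 → B i ℓ' ≠ 0 →
      2 * β i ℓ ≤ β i ℓ')
    (h4 : ∀ (i i' : Fin a) (ℓ : Fin b), i < i' → B i ℓ ≠ 0 → B i' ℓ ≠ 0 →
      2 * β i ℓ ≤ β i' ℓ)
    {m : ℕ} {r : Fin m → Fin a} {c : Fin m → Fin b}
    (hr : Function.Injective r)
    (π τ : Equiv.Perm (Fin m))
    (hπ : ∀ i, B (r i) (c (π i)) ≠ 0) (hτ : ∀ i, B (r i) (c (τ i)) ≠ 0)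
    {i0 : Fin m} (hdiff : π i0 ≠ τ i0)
    (hagree : ∀ v, r i0 < r v → π v = τ v)
    (hcc : c (τ i0) < c (π i0)) :
    ∃ σ : Equiv.Perm (Fin m), (∀ i, B (r i) (c (σ i)) ≠ 0) ∧
      (∑ i, β (r i) (c (σ i))) < (∑ i, β (r i) (c (π i))) := by
  classical
  set u : Fin m := π⁻¹ (τ i0) with hu
  have hπu : π u = τ i0 := by simp [hu]
  have hune : u ≠ i0 := by
    intro h
    exact hdiff (h ▸ hπu)
  have hru : r u < r i0 := by
    rcases lt_trichotomy (r u) (r i0) with h | h | h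
    · exact h
    · exact absurd (hr h) hune
    · exfalso
      have := hagree u h
      rw [hπu] at this
      exact hune (τ.injective this.symm)
  -- the swapped entry is nonzero
  have hBu : B (r u) (c (π i0)) ≠ 0 := by
    intro h0
    rcases h2 _ _ h0 with hcol | hrow
    · exact hπ i0 (hcol (r i0) hru)
    · exact hπ u (by rw [hπu]; exact hrow (c (τ i0)) hcc)
  refine ⟨π * Equiv.swap u i0, ?_, ?_⟩
  · intro i
    by_cases hiu : i = u
    · rw [hiu]
      have hσu : (π * Equiv.swap u i0) u = π i0 := by
        simp [Equiv.Perm.mul_apply, Equiv.swap_apply_left]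
      rw [hσu]; exact hBu
    · by_cases hii0 : i = i0
      · rw [hii0]
        have hσi0 : (π * Equiv.swap u i0) i0 = τ i0 := by
          simp [Equiv.Perm.mul_apply, Equiv.swap_apply_right, hπu]
        rw [hσi0]; exact hτ i0
      · have hσi : (π * Equiv.swap u i0) i = π i := by
          rw [Equiv.Perm.mul_apply, Equiv.swap_apply_of_ne_of_ne hiu hii0]
        rw [hσi]; exact hπ i
  · -- sum decreases strictly
    have e1 : 2 * β (r u) (c (π i0)) ≤ β (r i0) (c (π i0)) :=
      h4 _ _ _ hru hBu (hπ i0)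
    have e2 : 2 * β (r i0) (c (τ i0)) ≤ β (r i0) (c (π i0)) :=
      h3 _ _ _ hcc (hτ i0) (hπ i0)
    have e3 : 0 < β (r u) (c (π u)) := (h1 _ _ (hπ u)).2
    have key : β (r u) (c (π i0)) + β (r i0) (c (τ i0))
        < β (r u) (c (π u)) + β (r i0) (c (π i0)) := by omega
    have hs : ({u, i0} : Finset (Fin m)) ⊆ Finset.univ := Finset.subset_univ _
    rw [← Finset.sum_add_sum_compl ({u, i0} : Finset (Fin m))
      (fun i => β (r i) (c ((π * Equiv.swap u i0) i))),
      ← Finset.sum_add_sum_compl ({u, i0} : Finset (Fin m))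
      (fun i => β (r i) (c (π i)))]
    apply Nat.add_lt_add_of_lt_of_le
    · rw [Finset.sum_pair hune, Finset.sum_pair hune]
      have hσu : (π * Equiv.swap u i0) u = π i0 := by
        simp [Equiv.Perm.mul_apply, Equiv.swap_apply_left]
      have hσi0 : (π * Equiv.swap u i0) i0 = τ i0 := by
        simp [Equiv.Perm.mul_apply, Equiv.swap_apply_right, hπu]
      rw [hσu, hσi0]
      exact key
    · apply le_of_eq
      apply Finset.sum_congr rfl
      intro i hi
      rw [Finset.mem_compl, Finset.mem_insert, not_or, Finset.mem_singleton] at hi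
      rw [Equiv.Perm.mul_apply, Equiv.swap_apply_of_ne_of_ne hi.1 hi.2]

/-- Uniqueness of the minimal exponent sum. -/
lemma min_unique (B : Matrix (Fin a) (Fin b) F) (β : Fin a → Fin b → ℕ)
    (h1 : ∀ i ℓ, B i ℓ ≠ 0 → B i ℓ = α ^ β i ℓ ∧ 0 < β i ℓ)
    (h2 : ∀ i ℓ, B i ℓ = 0 →
      (∀ i' : Fin a, i < i' → B i' ℓ = 0) ∨ (∀ ℓ' : Fin b, ℓ' < ℓ → B i ℓ' = 0))
    (h3 : ∀ (i : Fin a) (ℓ ℓ' : Fin b), ℓ < ℓ' → B i ℓ ≠ 0 → B i ℓ' ≠ 0 →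
      2 * β i ℓ ≤ β i ℓ')
    (h4 : ∀ (i i' : Fin a) (ℓ : Fin b), i < i' → B i ℓ ≠ 0 → B i' ℓ ≠ 0 →
      2 * β i ℓ ≤ β i' ℓ)
    {m : ℕ} {r : Fin m → Fin a} {c : Fin m → Fin b}
    (hr : Function.Injective r) (hc : Function.Injective c)
    (π τ : Equiv.Perm (Fin m))
    (hπ : ∀ i, B (r i) (c (π i)) ≠ 0) (hτ : ∀ i, B (r i) (c (τ i)) ≠ 0)
    (hπmin : ∀ σ : Equiv.Perm (Fin m), (∀ i, B (r i) (c (σ i)) ≠ 0) →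
      (∑ i, β (r i) (c (π i))) ≤ ∑ i, β (r i) (c (σ i)))
    (hτmin : ∀ σ : Equiv.Perm (Fin m), (∀ i, B (r i) (c (σ i)) ≠ 0) →
      (∑ i, β (r i) (c (τ i))) ≤ ∑ i, β (r i) (c (σ i)))
    (hne : π ≠ τ) : False := by
  classical
  have hDne : (Finset.univ.filter (fun i => π i ≠ τ i)).Nonempty := by
    by_contra h
    rw [Finset.not_nonempty_iff_eq_empty, Finset.filter_eq_empty_iff] at h
    exact hne (Equiv.ext fun i => by
      have := h (Finset.mem_univ i); simpa using this)
  obtain ⟨i0, hi0mem, hmax⟩ :=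
    (Finset.univ.filter (fun i => π i ≠ τ i)).exists_max_image (fun i => r i) hDne
  have hdiff : π i0 ≠ τ i0 := by simpa using (Finset.mem_filter.mp hi0mem).2
  have hagree : ∀ v, r i0 < r v → π v = τ v := by
    intro v hv
    by_contra hvv
    have hvmem : v ∈ Finset.univ.filter (fun i => π i ≠ τ i) :=
      Finset.mem_filter.mpr ⟨Finset.mem_univ _, hvv⟩
    exact absurd hv (not_lt.mpr (hmax v hvmem))
  have hccne : c (π i0) ≠ c (τ i0) := fun h => hdiff (hc h)
  rcases hccne.lt_or_gt with h | h
  · -- c (π i0) < c (τ i0) : improve τ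
    obtain ⟨σ, hσ, hlt⟩ := improve_min B β h1 h2 h3 h4 hr τ π hτ hπ
      (Ne.symm hdiff) (fun v hv => (hagree v hv).symm) h
    exact absurd (hτmin σ hσ) (not_le.mpr hlt)
  · -- c (τ i0) < c (π i0) : improve π
    obtain ⟨σ, hσ, hlt⟩ := improve_min B β h1 h2 h3 h4 hr π τ hπ hτ
      hdiff hagree h
    exact absurd (hπmin σ hσ) (not_le.mpr hlt)

end Aux

theorem stmt4 {p N : ℕ} (hp : p.Prime) (hN : 0 < N)
    {F : Type*} [Field F] [Fintype F] (hcard : Fintype.card F = p ^ N)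
    (α : F) (hα : ∀ x : F, x ≠ 0 → ∃ k : ℕ, x = α ^ k)
    {a b : ℕ} (B : Matrix (Fin a) (Fin b) F) (β : Fin a → Fin b → ℕ)
    (h1 : ∀ i ℓ, B i ℓ ≠ 0 → B i ℓ = α ^ β i ℓ ∧ 0 < β i ℓ)
    (h2 : ∀ i ℓ, B i ℓ = 0 →
      (∀ i' : Fin a, i < i' → B i' ℓ = 0) ∨ (∀ ℓ' : Fin b, ℓ' < ℓ → B i ℓ' = 0))
    (h3 : ∀ (i : Fin a) (ℓ ℓ' : Fin b), ℓ < ℓ' → B i ℓ ≠ 0 → B i ℓ' ≠ 0 →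
      2 * β i ℓ ≤ β i ℓ')
    (h4 : ∀ (i i' : Fin a) (ℓ : Fin b), i < i' → B i ℓ ≠ 0 → B i' ℓ ≠ 0 →
      2 * β i ℓ ≤ β i' ℓ)
    (hNbig : ∀ (m : ℕ) (r : Fin m → Fin a) (c : Fin m → Fin b),
      Function.Injective r → Function.Injective c →
      ∀ σ : Equiv.Perm (Fin m), (∀ i, B (r i) (c (σ i)) ≠ 0) →
      (∑ i, β (r i) (c (σ i))) < N) :
    Superregular B := by
  classical
  -- characteristic of F is p
  haveI hfp : Fact p.Prime := ⟨hp⟩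
  have hqp : ringChar F = p := by
    haveI := ringChar.charP F
    obtain ⟨n, hq_prime, hcardq⟩ := FiniteField.card F (ringChar F)
    have hdvd : ringChar F ∣ p ^ N := by
      rw [← hcard, hcardq]
      exact dvd_pow_self _ n.pos.ne'
    exact (Nat.prime_dvd_prime_iff_eq hq_prime hp).mp (hq_prime.dvd_of_dvd_pow hdvd)
  haveI hcharp : CharP F p := hqp ▸ ringChar.charP F
  letI : Algebra (ZMod p) F := ZMod.algebra F p
  haveI : Finite F := Finite.of_fintype F
  have hint : IsIntegral (ZMod p) α := IsIntegral.of_finite (ZMod p) α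
  have hrank : Module.finrank (ZMod p) F = N := by
    have hcard2 : Fintype.card F = Fintype.card (ZMod p) ^ Module.finrank (ZMod p) F :=
      Module.card_eq_pow_finrank
    rw [ZMod.card, hcard] at hcard2
    exact Nat.pow_right_injective hp.two_le hcard2.symm
  have htop : IntermediateField.adjoin (ZMod p) {α} = ⊤ := by
    rw [eq_top_iff]
    intro x _
    by_cases hx : x = 0
    · subst hx; exact zero_mem _
    · obtain ⟨k, rfl⟩ := hα x hx
      exact pow_mem (IntermediateField.subset_adjoin _ _ (Set.mem_singleton α)) k
  have hdeg : (minpoly (ZMod p) α).natDegree = N := by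
    have h5 := IntermediateField.adjoin.finrank hint
    rw [← h5, htop, IntermediateField.finrank_top', hrank]
  have hlin : LinearIndependent (ZMod p) fun i : Fin N => α ^ (i : ℕ) := by
    have := linearIndependent_pow (K := ZMod p) α
    rwa [hdeg] at this
  -- the superregularity argument
  intro m r c hr hc hex
  set T : Finset (Equiv.Perm (Fin m)) :=
    Finset.univ.filter (fun σ => ∀ i, B (r i) (c (σ i)) ≠ 0) with hT
  set S : Equiv.Perm (Fin m) → ℕ := fun σ => ∑ i, β (r i) (c (σ i)) with hS
  have hTmem : ∀ σ, σ ∈ T ↔ ∀ i, B (r i) (c (σ i)) ≠ 0 := by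
    intro σ; simp [hT]
  have hTne : T.Nonempty := by
    obtain ⟨σ, hσ⟩ := hex
    exact ⟨σ, (hTmem σ).mpr hσ⟩
  obtain ⟨σ0, hσ0T, hσ0min⟩ := T.exists_min_image S hTne
  have hσ0 : ∀ i, B (r i) (c (σ0 i)) ≠ 0 := (hTmem σ0).mp hσ0T
  have huniq : ∀ τ ∈ T, τ ≠ σ0 → S σ0 < S τ := by
    intro τ hτT hτne
    by_contra hle
    have hτ := (hTmem τ).mp hτT
    have hττ : S τ ≤ S σ0 := not_lt.mp hle
    exact min_unique B β h1 h2 h3 h4 hr hc σ0 τ hσ0 hτ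
      (fun σ hσ => hσ0min σ ((hTmem σ).mpr hσ))
      (fun σ hσ => le_trans hττ (hσ0min σ ((hTmem σ).mpr hσ)))
      (Ne.symm hτne)
  -- determinant as a sum over T
  have hdet : (B.submatrix r c).det
      = ∑ σ ∈ T, ((Equiv.Perm.sign σ : ℤ) : F) * α ^ S σ := by
    rw [Matrix.det_apply']
    have hre : ∑ σ : Equiv.Perm (Fin m),
        ((Equiv.Perm.sign σ : ℤ) : F) * ∏ i, (B.submatrix r c) (σ i) i
        = ∑ σ : Equiv.Perm (Fin m),
        ((Equiv.Perm.sign σ : ℤ) : F) * ∏ i, B (r i) (c (σ i)) := by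
      rw [← Equiv.sum_comp (Equiv.inv (Equiv.Perm (Fin m)))
        (fun σ => ((Equiv.Perm.sign σ : ℤ) : F) * ∏ i, (B.submatrix r c) (σ i) i)]
      apply Finset.sum_congr rfl
      intro σ _
      simp only [Equiv.inv_apply, Equiv.Perm.sign_inv]
      congr 1
      rw [← Equiv.prod_comp σ (fun i => (B.submatrix r c) (σ⁻¹ i) i)]
      apply Finset.prod_congr rfl
      intro i _
      simp [Matrix.submatrix_apply]
    rw [hre]
    rw [← Finset.sum_filter_add_sum_filter_not Finset.univ
      (fun σ => ∀ i, B (r i) (c (σ i)) ≠ 0)]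
    have hz : ∑ σ ∈ Finset.univ.filter
        (fun σ : Equiv.Perm (Fin m) => ¬ ∀ i, B (r i) (c (σ i)) ≠ 0),
        ((Equiv.Perm.sign σ : ℤ) : F) * ∏ i, B (r i) (c (σ i)) = 0 := by
      apply Finset.sum_eq_zero
      intro σ hσ
      rw [Finset.mem_filter] at hσ
      push_neg at hσ
      obtain ⟨i, hi⟩ := hσ.2
      rw [Finset.prod_eq_zero (Finset.mem_univ i) hi, mul_zero]
    rw [hz, add_zero]
    apply Finset.sum_congr rfl
    intro σ hσ
    rw [Finset.mem_filter] at hσ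
    congr 1
    calc ∏ i, B (r i) (c (σ i)) = ∏ i, α ^ β (r i) (c (σ i)) :=
          Finset.prod_congr rfl fun i _ => (h1 _ _ (hσ.2 i)).1
      _ = α ^ S σ := Finset.prod_pow_eq_pow_sum _ _ _
  -- conclude via linear independence
  intro hdet0
  rw [hdet] at hdet0
  set n_ : ℕ → ℤ := fun k => ∑ σ ∈ T.filter (fun σ => S σ = k), (Equiv.Perm.sign σ : ℤ)
    with hn_
  have hmaps : ∀ σ ∈ T, S σ ∈ Finset.range N := by
    intro σ hσ
    exact Finset.mem_range.mpr (hNbig m r c hr hc σ ((hTmem σ).mp hσ))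
  have hgroup : ∑ k ∈ Finset.range N, ((n_ k : ℤ) : F) * α ^ k = 0 := by
    rw [← hdet0]
    rw [← Finset.sum_fiberwise_of_maps_to hmaps
      (fun σ => ((Equiv.Perm.sign σ : ℤ) : F) * α ^ S σ)]
    apply Finset.sum_congr rfl
    intro k _
    have : ∀ σ ∈ T.filter (fun σ => S σ = k),
        ((Equiv.Perm.sign σ : ℤ) : F) * α ^ S σ
        = ((Equiv.Perm.sign σ : ℤ) : F) * α ^ k := by
      intro σ hσ
      rw [(Finset.mem_filter.mp hσ).2]
    rw [Finset.sum_congr rfl this, ← Finset.sum_mul, hn_]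
    push_cast
    ring
  have hsum0 : ∑ k : Fin N, ((n_ (k : ℕ) : ZMod p)) • α ^ (k : ℕ) = 0 := by
    have hconv : ∀ k : ℕ, ((n_ k : ZMod p)) • α ^ k = ((n_ k : ℤ) : F) * α ^ k := by
      intro k
      rw [Algebra.smul_def, map_intCast]
    calc ∑ k : Fin N, ((n_ (k : ℕ) : ZMod p)) • α ^ (k : ℕ)
        = ∑ k : Fin N, ((n_ (k : ℕ) : ℤ) : F) * α ^ (k : ℕ) :=
          Finset.sum_congr rfl fun k _ => hconv k
      _ = ∑ k ∈ Finset.range N, ((n_ k : ℤ) : F) * α ^ k :=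
          Fin.sum_univ_eq_sum_range (fun k => ((n_ k : ℤ) : F) * α ^ k) N
      _ = 0 := hgroup
  have hS0lt : S σ0 < N := hNbig m r c hr hc σ0 hσ0
  have hall := Fintype.linearIndependent_iff.mp hlin
    (fun k : Fin N => (n_ (k : ℕ) : ZMod p)) hsum0 ⟨S σ0, hS0lt⟩
  -- but the fiber of S σ0 is exactly {σ0}
  have hfiber : T.filter (fun σ => S σ = S σ0) = {σ0} := by
    apply Finset.eq_singleton_iff_unique_mem.mpr
    constructor
    · exact Finset.mem_filter.mpr ⟨hσ0T, rfl⟩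
    · intro τ hτ
      rw [Finset.mem_filter] at hτ
      by_contra hτne
      exact absurd hτ.2 (ne_of_gt (huniq τ hτ.1 hτne))
  have hn0 : n_ (S σ0) = (Equiv.Perm.sign σ0 : ℤ) := by
    rw [hn_]
    simp [hfiber]
  rw [hn0] at hall
  rcases Int.units_eq_one_or (Equiv.Perm.sign σ0) with h | h <;> rw [h] at hall
  · simp at hall
  · simp at hall
end

section
/- Let C = [c_{ab}] be a square matrix of order m over a field such that det(C) has at least one nontrivial term, and such that C satisfies the zero-pattern property: if c_{iℓ} = 0 then c_{i'ℓ} = 0 for all i' > i, or c_{iℓ'} = 0 for all ℓ' < ℓ. Then there exists a permutation (i₁, i₂, …, i_m) of the columns of C, defined greedily by i_j = min{ i : c_{m−j+1, i} ≠ 0 and i ∉ {i₁,…,i_{j−1}} }, such that the antidiagonal term of the reordered matrix [C_{i₁} C_{i₂} ⋯ C_{i_m}] is nontrivial, i.e., c_{m−j+1, i_j} ≠ 0 for all j = 1, …, m. -/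
/-- Greedy construction of a nontrivial antidiagonal: if a square matrix `C` has a
nontrivial determinant term and satisfies the zero pattern property, then there is a
column permutation `π`, chosen greedily (row by row from the bottom, each time the
smallest still-unused column index with a nonzero entry), such that
`C (m-j+1) (π j) ≠ 0` for all `j`, i.e. the antidiagonal term of the reordered matrix
is nontrivial. -/
theorem stmt7 {F : Type*} [Field F] {m : ℕ}
    (C : Matrix (Fin m) (Fin m) F)
    (hnt : ∃ σ : Equiv.Perm (Fin m), ∀ i, C i (σ i) ≠ 0)
    (hzero : ∀ i ℓ, C i ℓ = 0 →
      (∀ i' : Fin m, i < i' → C i' ℓ = 0) ∨ (∀ ℓ' : Fin m, ℓ' < ℓ → C i ℓ' = 0)) :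
    ∃ π : Equiv.Perm (Fin m),
      (∀ j : Fin m, C j.rev (π j) ≠ 0) ∧
      (∀ j i : Fin m, C j.rev i ≠ 0 → (∀ j' : Fin m, j' < j → π j' ≠ i) → π j ≤ i) := by
  classical
  suffices h : ∀ n : ℕ, n ≤ m → ∃ σ : Equiv.Perm (Fin m),
      (∀ i, C i (σ i) ≠ 0) ∧
      (∀ k : Fin m, (k : ℕ) < n → ∀ i, C k.rev i ≠ 0 →
        (∀ k' : Fin m, k' < k → σ k'.rev ≠ i) → σ k.rev ≤ i) by
    obtain ⟨σ, h1, h2⟩ := h m le_rfl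
    exact ⟨Fin.revPerm.trans σ, fun j => h1 j.rev,
      fun j i hi hne => h2 j j.isLt i hi (fun k' hk' => hne k' hk')⟩
  intro n
  induction n with
  | zero =>
    intro _
    obtain ⟨σ, hσ⟩ := hnt
    exact ⟨σ, hσ, fun k hk => absurd hk (Nat.not_lt_zero _)⟩
  | succ n ih =>
    intro hn
    obtain ⟨σ, hσ, hmin⟩ := ih (Nat.le_of_succ_le hn)
    set kn : Fin m := ⟨n, hn⟩ with hkn
    set r : Fin m := kn.rev with hrdef
    set a : Fin m := σ r with hadef
    set S : Finset (Fin m) :=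
      Finset.univ.filter (fun i => C r i ≠ 0 ∧ ∀ k' : Fin m, (k' : ℕ) < n → σ k'.rev ≠ i)
      with hSdef
    have hmem : ∀ i : Fin m, i ∈ S ↔
        (C r i ≠ 0 ∧ ∀ k' : Fin m, (k' : ℕ) < n → σ k'.rev ≠ i) := by
      intro i; simp [hSdef]
    have haS : a ∈ S := by
      rw [hmem]
      refine ⟨hσ r, fun k' hk' hek => ?_⟩
      have h1 : k'.rev = r := σ.injective hek
      have h2 : k' = kn := Fin.rev_injective h1
      rw [h2] at hk'
      exact absurd hk' (lt_irrefl n)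
    have hSne : S.Nonempty := ⟨a, haS⟩
    set b : Fin m := S.min' hSne with hbdef
    have hbS : b ∈ S := S.min'_mem hSne
    have hbC : C r b ≠ 0 := ((hmem b).mp hbS).1
    have hbunused : ∀ k' : Fin m, (k' : ℕ) < n → σ k'.rev ≠ b := ((hmem b).mp hbS).2
    have hba : b ≤ a := S.min'_le a haS
    set σ' : Equiv.Perm (Fin m) := σ.trans (Equiv.swap a b) with hσ'def
    have hσ'r : σ' r = b := by simp [hσ'def, ← hadef, Equiv.swap_apply_left]
    have hσ'old : ∀ k' : Fin m, (k' : ℕ) < n → σ' k'.rev = σ k'.rev := by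
      intro k' hk'
      have hne_a : σ k'.rev ≠ a := by
        intro he
        have h1 : k'.rev = r := σ.injective he
        have h2 : k' = kn := Fin.rev_injective h1
        rw [h2] at hk'; exact absurd hk' (lt_irrefl n)
      have hne_b : σ k'.rev ≠ b := hbunused k' hk'
      simp [hσ'def, Equiv.swap_apply_of_ne_of_ne hne_a hne_b]
    refine ⟨σ', ?_, ?_⟩
    · -- all entries along σ' are nonzero
      intro i
      by_cases hia : σ i = a
      · have : i = r := σ.injective hia
        rw [this, hσ'r]
        rw [this] at *
        exact hbC
      · by_cases hib : σ i = b
        · -- σ' i = a ; need C i a ≠ 0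
          have hne_ab : b ≠ a := by rw [← hib]; exact hia
          have hσ'i : σ' i = a := by simp [hσ'def, hib, Equiv.swap_apply_right]
          rw [hσ'i]
          have hir : i ≠ r := fun he => hia (by rw [he, ← hadef])
          -- show i < r
          have hilt : i < r := by
            rcases lt_trichotomy i r with h | h | h
            · exact h
            · exact absurd h hir
            · exfalso
              have hirev : (i.rev : ℕ) < n := by
                have := h
                rw [hrdef] at this
                have h1 : kn.rev < i.rev.rev := by rwa [Fin.rev_rev]
                have h2 : i.rev < kn := Fin.rev_lt_rev.mp h1
                exact Fin.lt_iff_val_lt_val.mp h2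
              exact hbunused i.rev hirev (by rwa [Fin.rev_rev])
          by_contra hC
          rcases hzero i a hC with hcol | hrow
          · exact hσ r (hcol r hilt)
          · have hblt : b < a := lt_of_le_of_ne hba hne_ab
            exact (hib ▸ hσ i) (hrow b hblt)
        · have : σ' i = σ i := by
            simp [hσ'def, Equiv.swap_apply_of_ne_of_ne hia hib]
          rw [this]; exact hσ i
    · -- greedy minimality for k < n+1
      intro k hk i hCi hne
      by_cases hkcase : (k : ℕ) < n
      · rw [hσ'old k hkcase]
        refine hmin k hkcase i hCi ?_
        intro k' hk'
        have hk'n : (k' : ℕ) < n := lt_trans (Fin.lt_iff_val_lt_val.mp hk') hkcase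
        rw [← hσ'old k' hk'n]
        exact hne k' hk'
      · have hkn' : k = kn := by
          have : (k : ℕ) = n := Nat.le_antisymm (Nat.le_of_lt_succ hk) (Nat.le_of_not_lt hkcase)
          exact Fin.ext this
        rw [hkn', ← hrdef, hσ'r]
        refine S.min'_le i ?_
        rw [hmem]
        refine ⟨by rwa [hkn', ← hrdef] at hCi, fun k' hk' => ?_⟩
        have hk'k : k' < k := by rw [hkn']; exact Fin.lt_iff_val_lt_val.mpr (by simpa [hkn] using hk')
        rw [← hσ'old k' hk']
        exact hne k' hk'k
end

section
/- Let C be a convolutional code of rate k/n with distinct Forney indices ν₁ < ν₂ < ⋯ < ν_ℓ having multiplicities m₁, …, m_ℓ. Then the distance of C satisfies dist(C) ≤ n(ν₁ + 1) − m₁ + 1. -/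
/-- The weight of a polynomial vector: the total number of nonzero field coefficients. -/
def polyWt {F : Type*} [Semiring F] {n : ℕ} (v : Fin n → Polynomial F) : ℕ :=
  ∑ i, (v i).support.card

/-- Upper bound on the distance of a convolutional code: given a column reduced encoder
`G(z)` with column degrees `D`, smallest column degree (Forney index) `ν₁` of
multiplicity `m₁`, there exists a nonzero codeword of weight at most
`n(ν₁+1) - m₁ + 1`; hence `dist(C) ≤ n(ν₁+1) - m₁ + 1`. -/
theorem stmt8 {F : Type*} [Field F] {n k : ℕ} (hk : 0 < k) (hkn : k < n)
    (G : Matrix (Fin n) (Fin k) (Polynomial F))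
    (D : Fin k → ℕ)
    (hdeg : ∀ (i : Fin n) (j : Fin k), (G i j).natDegree ≤ D j)
    (hred : (Matrix.of fun (i : Fin n) (j : Fin k) => (G i j).coeff (D j)).rank = k)
    (ν₁ : ℕ) (hmin : ∀ j, ν₁ ≤ D j) (hex : ∃ j, D j = ν₁)
    (m₁ : ℕ) (hm₁ : m₁ = Nat.card {j : Fin k // D j = ν₁}) :
    ∃ u : Fin k → Polynomial F, G.mulVec u ≠ 0 ∧
      polyWt (G.mulVec u) ≤ n * (ν₁ + 1) - m₁ + 1 := by
  classical
  obtain ⟨j₀, hj₀⟩ := hex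
  -- m₁ as a Fintype card
  have hm₁' : m₁ = Fintype.card {j : Fin k // D j = ν₁} := by
    rw [hm₁, Nat.card_eq_fintype_card]
  have hm₁pos : 1 ≤ m₁ := by
    rw [hm₁']
    exact Fintype.card_pos_iff.2 ⟨⟨j₀, hj₀⟩⟩
  have hm₁k : m₁ ≤ k := by
    rw [hm₁']
    simpa using Fintype.card_subtype_le (fun j : Fin k => D j = ν₁)
  -- choose a set T of m₁ - 1 rows
  obtain ⟨T, -, hT⟩ := Finset.exists_subset_card_eq
    (show m₁ - 1 ≤ (Finset.univ : Finset (Fin n)).card by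
      simp; omega)
  -- the linear map from S-indexed vectors to T-indexed vectors
  set φ : ({j : Fin k // D j = ν₁} → F) →ₗ[F] ({i : Fin n // i ∈ T} → F) :=
    (Matrix.of fun (i : {i : Fin n // i ∈ T}) (j : {j : Fin k // D j = ν₁}) =>
      (G i.1 j.1).coeff ν₁).mulVecLin with hφ
  have hnotinj : ¬ Function.Injective φ := by
    intro hinj
    have := LinearMap.finrank_le_finrank_of_injective hinj
    rw [Module.finrank_pi, Module.finrank_pi, Fintype.card_coe, ← hm₁', hT] at this
    omega
  obtain ⟨x, y, hxy, hne⟩ := Function.not_injective_iff.1 hnotinj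
  set c : {j : Fin k // D j = ν₁} → F := x - y with hc
  have hcne : c ≠ 0 := sub_ne_zero.2 hne
  have hφc : φ c = 0 := by rw [hc, map_sub, hxy, sub_self]
  -- extend c to Fin k
  set c' : Fin k → F := fun j => if h : D j = ν₁ then c ⟨j, h⟩ else 0 with hc'
  have hc'ne : c' ≠ 0 := by
    intro h0
    apply hcne
    funext j
    have := congrFun h0 j.1
    simpa [hc', j.2] using this
  set u : Fin k → Polynomial F := fun j => Polynomial.C (c' j) with hu
  -- top coefficient identity
  set A : Matrix (Fin n) (Fin k) F :=
    Matrix.of fun (i : Fin n) (j : Fin k) => (G i j).coeff (D j) with hA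
  have hcoeff : ∀ i, (G.mulVec u i).coeff ν₁ = A.mulVec c' i := by
    intro i
    rw [Matrix.mulVec, dotProduct, Polynomial.finset_sum_coeff]
    rw [Matrix.mulVec, dotProduct]
    apply Finset.sum_congr rfl
    intro j _
    rw [hu]
    simp only [Polynomial.coeff_mul_C, hA, Matrix.of_apply]
    by_cases h : D j = ν₁
    · rw [h]
    · simp [hc', h]
  -- A has trivial kernel
  have hker : LinearMap.ker A.mulVecLin = ⊥ := by
    have h1 := LinearMap.finrank_range_add_finrank_ker A.mulVecLin
    rw [Module.finrank_pi] at h1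
    have h2 : A.rank = Module.finrank F (LinearMap.range A.mulVecLin) := rfl
    rw [← h2, hred] at h1
    simp at h1
    exact h1
  have hAc' : A.mulVec c' ≠ 0 := by
    intro h0
    exact hc'ne (by
      have : c' ∈ LinearMap.ker A.mulVecLin := by
        simpa [Matrix.mulVecLin] using h0
      rwa [hker, Submodule.mem_bot] at this)
  -- the codeword is nonzero
  have hGu : G.mulVec u ≠ 0 := by
    intro h0
    apply hAc'
    funext i
    have := hcoeff i
    rw [h0] at this
    simpa using this.symm
  -- degree bound on entries
  have hdeg' : ∀ i, (G.mulVec u i).natDegree ≤ ν₁ := by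
    intro i
    rw [Matrix.mulVec, dotProduct]
    refine le_trans (Polynomial.natDegree_sum_le _ _) ?_
    rw [Finset.fold_max_le]
    refine ⟨Nat.zero_le _, fun j _ => ?_⟩
    by_cases h : D j = ν₁
    · refine le_trans (Polynomial.natDegree_mul_le) ?_
      simpa [hu] using le_trans (hdeg i j) h.le
    · simp [hu, hc', h]
  -- coefficient ν₁ vanishes on rows in T
  have hTzero : ∀ i ∈ T, (G.mulVec u i).coeff ν₁ = 0 := by
    intro i hi
    rw [hcoeff i]
    have hz := congrFun hφc ⟨i, hi⟩
    rw [hφ] at hz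
    simp only [Matrix.mulVecLin_apply, Pi.zero_apply, Matrix.mulVec, dotProduct,
      Matrix.of_apply] at hz
    show ∑ j, A i j * c' j = 0
    rw [← hz]
    rw [← Finset.sum_filter_of_ne (p := fun j => D j = ν₁)
      (by intro j _ hne0 ; by_contra h ; exact hne0 (by simp [hA, hc', h]))]
    rw [Finset.sum_subtype (p := fun j => D j = ν₁) (Finset.univ.filter (fun j => D j = ν₁))
      (by simp) (fun j => A i j * c' j)]
    apply Finset.sum_congr rfl
    intro j _
    have hj := j.2
    simp [hA, hc', hj]
  -- support bounds
  have hsupp : ∀ i, (G.mulVec u i).support.card ≤ if i ∈ T then ν₁ else ν₁ + 1 := by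
    intro i
    by_cases hi : i ∈ T
    · simp only [hi, if_true]
      have hsub : (G.mulVec u i).support ⊆ Finset.range ν₁ := by
        intro a ha
        have h1 : a < ν₁ + 1 :=
          Finset.mem_range.1 (Polynomial.supp_subset_range (Nat.lt_succ_of_le (hdeg' i)) ha)
        have h2 : a ≠ ν₁ := by
          intro h
          exact Polynomial.mem_support_iff.1 ha (h ▸ hTzero i hi)
        exact Finset.mem_range.2 (by omega)
      simpa using Finset.card_le_card hsub
    · simp only [hi, if_false]
      have hsub : (G.mulVec u i).support ⊆ Finset.range (ν₁ + 1) :=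
        Polynomial.supp_subset_range (Nat.lt_succ_of_le (hdeg' i))
      simpa using Finset.card_le_card hsub
  refine ⟨u, hGu, ?_⟩
  have hb : polyWt (G.mulVec u) ≤ ∑ i : Fin n, (if i ∈ T then ν₁ else ν₁ + 1) :=
    Finset.sum_le_sum (fun i _ => hsupp i)
  have hTn : T.card ≤ n := by
    simpa using Finset.card_le_card (Finset.subset_univ T)
  have hsum : (∑ i : Fin n, if i ∈ T then ν₁ else ν₁ + 1) + T.card = n * (ν₁ + 1) := by
    rw [Finset.sum_ite, Finset.sum_const, Finset.sum_const, smul_eq_mul, smul_eq_mul]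
    have h1 : (Finset.univ.filter (fun i : Fin n => i ∈ T)).card = T.card := by
      congr 1; ext i; simp
    have h2 : (Finset.univ.filter (fun i : Fin n => ¬ i ∈ T)).card = n - T.card := by
      rw [Finset.filter_not, Finset.card_sdiff_of_subset (Finset.filter_subset _ _), h1]
      simp
    rw [h1, h2, Nat.sub_mul]
    have h3 : T.card * (ν₁ + 1) = T.card * ν₁ + T.card := by ring
    have h4 : T.card * (ν₁ + 1) ≤ n * (ν₁ + 1) := Nat.mul_le_mul_right _ hTn
    omega
  have hmN : m₁ ≤ n * (ν₁ + 1) := by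
    have : n ≤ n * (ν₁ + 1) := Nat.le_mul_of_pos_right n (by omega)
    omega
  omega
end

section
/- Let B = [b₀ b₁ ⋯ b_{n−1}] ∈ F^{n×n} be a lower triangular matrix. Then B is LT-superregular if and only if for every F-linear combination b (with nonzero coefficients) of columns b_{i₁}, b_{i₂}, …, b_{i_N} with i₁ < i₂ < ⋯ < i_N, one has wt(b) ≥ (n − i₁) − N + 1. -/
/-- A lower triangular matrix is LT-superregular if every minor all of whose diagonal
entries come from the lower triangular part (i.e. given by strictly increasing row and
column selections `r`, `c` with `c i ≤ r i`) is nonzero. -/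
def LTSuperregular {F : Type*} [Field F] {n : ℕ} (B : Matrix (Fin n) (Fin n) F) : Prop :=
  ∀ (N : ℕ) (r c : Fin N → Fin n), StrictMono r → StrictMono c →
    (∀ i, c i ≤ r i) → (B.submatrix r c).det ≠ 0

/-- The weight of a vector: the number of its nonzero entries. -/
noncomputable def wt {F : Type*} [Zero F] {ι : Type*} (v : ι → F) : ℕ :=
  Nat.card {i // v i ≠ 0}

private lemma wt_eq_card {F : Type*} [Zero F] {n : ℕ} (v : Fin n → F)
    [DecidablePred fun i => v i ≠ 0] :
    wt v = (Finset.univ.filter fun i => v i ≠ 0).card := by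
  rw [wt, Nat.card_eq_fintype_card, Fintype.card_subtype]

private lemma gap {n N : ℕ} {c : Fin N → Fin n} (hc : StrictMono c) (hN : 0 < N) :
    ∀ (m : ℕ) (hm : m < N), ((c ⟨0, hN⟩ : Fin n) : ℕ) + m ≤ (c ⟨m, hm⟩ : ℕ) := by
  intro m
  induction m with
  | zero => intro hm; simp
  | succ k ih =>
      intro hm
      have hk := Nat.lt_of_succ_lt hm
      have h1 := ih hk
      have h2 : c ⟨k, hk⟩ < c ⟨k + 1, hm⟩ := hc (by simp [Fin.lt_def])
      rw [Fin.lt_def] at h2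
      omega

private lemma image_orderEmbOfFin {α : Type*} [LinearOrder α] [DecidableEq α]
    (s : Finset α) {m : ℕ} (h : s.card = m) :
    Finset.image (s.orderEmbOfFin h) Finset.univ = s := by
  apply Finset.eq_of_subset_of_card_le
  · intro x hx
    obtain ⟨j, _, rfl⟩ := Finset.mem_image.mp hx
    exact s.orderEmbOfFin_mem h j
  · rw [Finset.card_image_of_injective _ (s.orderEmbOfFin h).injective, Finset.card_univ,
      Fintype.card_fin, h]

private lemma ltsr_forward {F : Type*} [Field F] {n : ℕ} (B : Matrix (Fin n) (Fin n) F)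
    (hlt : ∀ i j : Fin n, i < j → B i j = 0) (hsr : LTSuperregular B) :
    ∀ (N : ℕ) (hN : 0 < N) (c : Fin N → Fin n), StrictMono c →
      ∀ f : Fin N → F, (∀ j, f j ≠ 0) →
        n - (c ⟨0, hN⟩ : ℕ) - N + 1 ≤ wt (fun i => ∑ j, f j * B i (c j)) := by
  intro N
  induction N using Nat.strong_induction_on with
  | _ N ih =>
  intro hN c hc f hf
  classical
  by_contra hcon
  push_neg at hcon
  set b : Fin n → F := fun i => ∑ j, f j * B i (c j) with hb
  set c0 : Fin n := c ⟨0, hN⟩ with hc0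
  have hb0 : ∀ i : Fin n, i < c0 → b i = 0 := by
    intro i hi
    apply Finset.sum_eq_zero
    intro j _
    have hij : i < c j :=
      lt_of_lt_of_le hi (hc.monotone (by rw [Fin.le_def]; exact Nat.zero_le _))
    rw [hlt i (c j) hij, mul_zero]
  set NZ : Finset (Fin n) := Finset.univ.filter (fun i => b i ≠ 0) with hNZ
  have hwt : wt b = NZ.card := wt_eq_card b
  have hNZsub : NZ ⊆ Finset.Ici c0 := by
    intro x hx
    rw [Finset.mem_Ici]
    by_contra hx2
    push_neg at hx2
    exact (Finset.mem_filter.mp hx).2 (hb0 x hx2)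
  set Z : Finset (Fin n) := Finset.Ici c0 \ NZ with hZdef
  have hZmem : ∀ x, x ∈ Z → c0 ≤ x ∧ b x = 0 := by
    intro x hx
    rw [Finset.mem_sdiff, Finset.mem_Ici, Finset.mem_filter] at hx
    exact ⟨hx.1, not_not.mp fun hne => hx.2 ⟨Finset.mem_univ x, hne⟩⟩
  have hZcard : Z.card = (n - (c0 : ℕ)) - NZ.card := by
    rw [hZdef, Finset.card_sdiff_of_subset hNZsub, Fin.card_Ici]
  have hgap := gap hc hN (N - 1) (by omega)
  have hc0n : (c0 : ℕ) + N ≤ n := by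
    have := (c ⟨N - 1, by omega⟩).isLt
    omega
  have hZN : N ≤ Z.card := by omega
  set r : Fin N → Fin n := fun j => Z.orderEmbOfFin rfl ⟨j.1, lt_of_lt_of_le j.2 hZN⟩ with hr
  have hrmem : ∀ j, r j ∈ Z := fun j => Z.orderEmbOfFin_mem rfl _
  have hrmono : StrictMono r := by
    intro a b hab
    exact (Z.orderEmbOfFin rfl).strictMono (Fin.mk_lt_mk.mpr hab)
  by_cases hrc : ∀ j, c j ≤ r j
  · have hdet := hsr N r c hrmono hc hrc
    apply hdet
    rw [← Matrix.exists_mulVec_eq_zero_iff]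
    refine ⟨f, ?_, ?_⟩
    · intro h0
      exact hf ⟨0, hN⟩ (by rw [h0]; rfl)
    · funext t
      have hbt : ∑ j, f j * B (r t) (c j) = 0 := (hZmem _ (hrmem t)).2
      calc (B.submatrix r c).mulVec f t = ∑ j, B (r t) (c j) * f j := by
            simp [Matrix.mulVec, dotProduct]
        _ = ∑ j, f j * B (r t) (c j) := by
            exact Finset.sum_congr rfl fun j _ => mul_comm _ _
        _ = 0 := hbt
  · push_neg at hrc
    obtain ⟨i, hi⟩ := hrc
    set k := (i : ℕ) with hkdef
    have hk1 : 0 < k := by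
      rcases Nat.eq_zero_or_pos k with h0 | h
      · exfalso
        have hieq : i = ⟨0, hN⟩ := Fin.ext h0
        have hle : c0 ≤ r i := (hZmem _ (hrmem i)).1
        rw [hieq] at hi hle
        exact absurd hle (not_le.mpr hi)
      · exact h
    have hkN : k < N := i.isLt
    set c' : Fin k → Fin n := fun j => c (Fin.castLE hkN.le j) with hc'def
    set f' : Fin k → F := fun j => f (Fin.castLE hkN.le j) with hf'def
    have hc'mono : StrictMono c' := fun a b hab => hc (Fin.mk_lt_mk.mpr hab)
    have hih := ih k hkN hk1 c' hc'mono f' (fun j => hf _)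
    set b'' : Fin n → F := fun row => ∑ j, f' j * B row (c' j) with hb''
    have hc'0 : c' ⟨0, hk1⟩ = c0 := rfl
    rw [hc'0] at hih
    have hhead : ∀ row : Fin n, row < c i → b row = b'' row := by
      intro row hrow
      have hz : ∀ j ∈ (Finset.univ : Finset (Fin N)),
          f j * B row (c j) ≠ 0 → ((j : ℕ) < k) := by
        intro j _ hj
        by_contra hge
        push_neg at hge
        have hij : i ≤ j := by rw [Fin.le_def]; exact hge
        have hrj : row < c j := lt_of_lt_of_le hrow (hc.monotone hij)
        exact hj (by rw [hlt row (c j) hrj, mul_zero])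
      have himg : Finset.univ.filter (fun j : Fin N => (j : ℕ) < k)
          = Finset.image (Fin.castLE hkN.le) Finset.univ := by
        ext j
        simp only [Finset.mem_filter, Finset.mem_univ, true_and, Finset.mem_image]
        constructor
        · intro hj; exact ⟨⟨j.1, hj⟩, rfl⟩
        · rintro ⟨x, -, rfl⟩; exact x.isLt
      calc b row = ∑ j ∈ Finset.univ.filter (fun j : Fin N => (j : ℕ) < k),
              f j * B row (c j) := (Finset.sum_filter_of_ne hz).symm
        _ = ∑ x : Fin k, f (Fin.castLE hkN.le x) * B row (c (Fin.castLE hkN.le x)) := by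
            rw [himg, Finset.sum_image (fun a _ b _ hab => Fin.castLE_injective hkN.le hab)]
        _ = b'' row := rfl
    set ci : Fin n := c i with hcidef
    have hciN : (ci : ℕ) < n := ci.isLt
    set NZ'' : Finset (Fin n) := Finset.univ.filter (fun row => b'' row ≠ 0) with hNZ''
    have hwt'' : wt b'' = NZ''.card := wt_eq_card b''
    have hsplit : NZ''.card ≤ (NZ'' ∩ Finset.Iio ci).card + (NZ'' ∩ Finset.Ici ci).card := by
      have hsub : NZ'' ⊆ (NZ'' ∩ Finset.Iio ci) ∪ (NZ'' ∩ Finset.Ici ci) := by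
        intro x hx
        rcases lt_or_ge x ci with h | h
        · exact Finset.mem_union_left _ (Finset.mem_inter.mpr ⟨hx, Finset.mem_Iio.mpr h⟩)
        · exact Finset.mem_union_right _ (Finset.mem_inter.mpr ⟨hx, Finset.mem_Ici.mpr h⟩)
      exact le_trans (Finset.card_le_card hsub) (Finset.card_union_le _ _)
    have htail : (NZ'' ∩ Finset.Ici ci).card ≤ n - (ci : ℕ) := by
      calc (NZ'' ∩ Finset.Ici ci).card ≤ (Finset.Ici ci).card :=
            Finset.card_le_card Finset.inter_subset_right
        _ = n - (ci : ℕ) := by rw [Fin.card_Ici]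
    set R : Finset (Fin n) := Finset.image r (Finset.Iic i) with hRdef
    have hRcard : R.card = k + 1 := by
      rw [hRdef, Finset.card_image_of_injective _ hrmono.injective, Fin.card_Iic]
    have hRsub : R ⊆ Finset.Ico c0 ci := by
      intro x hx
      obtain ⟨t, ht, rfl⟩ := Finset.mem_image.mp hx
      rw [Finset.mem_Iic] at ht
      rw [Finset.mem_Ico]
      exact ⟨(hZmem _ (hrmem t)).1, lt_of_le_of_lt (hrmono.monotone ht) hi⟩
    have hheadsub : NZ'' ∩ Finset.Iio ci ⊆ Finset.Ico c0 ci \ R := by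
      intro x hx
      rw [Finset.mem_inter, Finset.mem_Iio] at hx
      obtain ⟨hx1, hx2⟩ := hx
      have hxne : b x ≠ 0 := by
        rw [hhead x hx2]
        exact (Finset.mem_filter.mp hx1).2
      rw [Finset.mem_sdiff, Finset.mem_Ico]
      refine ⟨⟨?_, hx2⟩, ?_⟩
      · by_contra h; push_neg at h; exact hxne (hb0 x h)
      · intro hxR
        obtain ⟨t, -, rfl⟩ := Finset.mem_image.mp hxR
        exact hxne (hZmem _ (hrmem t)).2
    have hheadcard : (NZ'' ∩ Finset.Iio ci).card ≤ ((ci : ℕ) - (c0 : ℕ)) - (k + 1) := by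
      calc (NZ'' ∩ Finset.Iio ci).card ≤ (Finset.Ico c0 ci \ R).card :=
            Finset.card_le_card hheadsub
        _ = (Finset.Ico c0 ci).card - R.card := Finset.card_sdiff_of_subset hRsub
        _ = ((ci : ℕ) - (c0 : ℕ)) - (k + 1) := by rw [Fin.card_Ico, hRcard]
    have hcc : (c0 : ℕ) + k + 1 ≤ (ci : ℕ) := by
      have h1 : R.card ≤ (Finset.Ico c0 ci).card := Finset.card_le_card hRsub
      rw [Fin.card_Ico, hRcard] at h1
      have h2 : (c0 : ℕ) ≤ (ci : ℕ) := by
        have := (hZmem _ (hrmem i)).1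
        rw [Fin.le_def] at this
        rw [Fin.lt_def] at hi
        omega
      omega
    omega

/-- A lower triangular matrix `B = [b₀ ⋯ b_{n-1}]` is LT-superregular if and only if
every linear combination with nonzero coefficients of columns `b_{i₁}, …, b_{i_N}`
(`i₁ < ⋯ < i_N`) has weight at least `(n - i₁) - N + 1`. -/
theorem stmt18 {F : Type*} [Field F] {n : ℕ} (B : Matrix (Fin n) (Fin n) F)
    (hlt : ∀ i j : Fin n, i < j → B i j = 0) :
    LTSuperregular B ↔
      ∀ (N : ℕ) (hN : 0 < N) (c : Fin N → Fin n), StrictMono c →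
        ∀ f : Fin N → F, (∀ j, f j ≠ 0) →
          n - (c ⟨0, hN⟩ : ℕ) - N + 1 ≤ wt (fun i => ∑ j, f j * B i (c j)) := by
  constructor
  · intro hsr
    exact ltsr_forward B hlt hsr
  · intro H N r c hr hc hrc hdet
    classical
    obtain ⟨v, hv0, hveq⟩ := Matrix.exists_mulVec_eq_zero_iff.mpr hdet
    set S : Finset (Fin N) := Finset.univ.filter (fun j => v j ≠ 0) with hSdef
    have hSne : 0 < S.card := by
      obtain ⟨j, hj⟩ := Function.ne_iff.mp hv0
      exact Finset.card_pos.mpr ⟨j, Finset.mem_filter.mpr ⟨Finset.mem_univ _, hj⟩⟩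
    set e := S.orderEmbOfFin rfl with hedef
    have hemem : ∀ t, e t ∈ S := fun t => S.orderEmbOfFin_mem rfl t
    have hw := H S.card hSne (fun t => c (e t)) (fun a b hab => hc (e.strictMono hab))
        (fun t => v (e t)) (fun t => (Finset.mem_filter.mp (hemem t)).2)
    set j0 : Fin N := e ⟨0, hSne⟩ with hj0def
    set b : Fin n → F := fun row => ∑ j, v j * B row (c j) with hbdef
    have hbeq : (fun row => ∑ t : Fin S.card, v (e t) * B row (c (e t))) = b := by
      funext row
      have hfil : ∀ x ∈ (Finset.univ : Finset (Fin N)),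
          v x * B row (c x) ≠ 0 → v x ≠ 0 := by
        intro x _ hx h0
        exact hx (by rw [h0, zero_mul])
      calc ∑ t : Fin S.card, v (e t) * B row (c (e t))
          = ∑ j ∈ Finset.image e Finset.univ, v j * B row (c j) := by
            rw [Finset.sum_image (fun a _ b _ hab => e.injective hab)]
        _ = ∑ j ∈ S, v j * B row (c j) := by rw [image_orderEmbOfFin]
        _ = ∑ j, v j * B row (c j) := by rw [hSdef]; exact Finset.sum_filter_of_ne hfil
        _ = b row := rfl
    rw [hbeq] at hw
    have hw2 : n - ((c j0 : Fin n) : ℕ) - S.card + 1 ≤ wt b := hw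
    clear hw
    have hbr : ∀ t : Fin N, b (r t) = 0 := by
      intro t
      have hvt := congrFun hveq t
      have : ∑ j, B (r t) (c j) * v j = 0 := by
        simpa [Matrix.mulVec, dotProduct] using hvt
      calc b (r t) = ∑ j, v j * B (r t) (c j) := rfl
        _ = ∑ j, B (r t) (c j) * v j := Finset.sum_congr rfl fun j _ => mul_comm _ _
        _ = 0 := this
    have hminS : ∀ s ∈ S, j0 ≤ s := by
      intro s hs
      have hsi : s ∈ Finset.image e Finset.univ := by
        rw [image_orderEmbOfFin]; exact hs
      obtain ⟨t, -, rfl⟩ := Finset.mem_image.mp hsi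
      exact e.monotone (by rw [Fin.le_def]; exact Nat.zero_le _)
    have hblow : ∀ row : Fin n, row < c j0 → b row = 0 := by
      intro row hrow
      apply Finset.sum_eq_zero
      intro j _
      by_cases hvj : v j = 0
      · rw [hvj, zero_mul]
      · have hjS : j ∈ S := Finset.mem_filter.mpr ⟨Finset.mem_univ _, hvj⟩
        have hrj : row < c j := lt_of_lt_of_le hrow (hc.monotone (hminS j hjS))
        rw [hlt row (c j) hrj, mul_zero]
    set NZ : Finset (Fin n) := Finset.univ.filter (fun row => b row ≠ 0) with hNZdef
    have hwtb : wt b = NZ.card := wt_eq_card b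
    set T : Finset (Fin n) := Finset.image r (Finset.Ici j0) with hTdef
    have hTcard : T.card = N - (j0 : ℕ) := by
      rw [hTdef, Finset.card_image_of_injective _ hr.injective, Fin.card_Ici]
    have hTsub : T ⊆ Finset.Ici (c j0) := by
      intro x hx
      obtain ⟨t, ht, rfl⟩ := Finset.mem_image.mp hx
      rw [Finset.mem_Ici] at ht ⊢
      exact le_trans (hc.monotone ht) (hrc t)
    have hNZsub : NZ ⊆ Finset.Ici (c j0) \ T := by
      intro x hx
      have hxne := (Finset.mem_filter.mp hx).2
      rw [Finset.mem_sdiff, Finset.mem_Ici]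
      constructor
      · by_contra h; push_neg at h; exact hxne (hblow x h)
      · intro hxT
        obtain ⟨t, -, rfl⟩ := Finset.mem_image.mp hxT
        exact hxne (hbr t)
    have hcard1 : NZ.card ≤ (n - (c j0 : ℕ)) - (N - (j0 : ℕ)) := by
      calc NZ.card ≤ (Finset.Ici (c j0) \ T).card := Finset.card_le_card hNZsub
        _ = (Finset.Ici (c j0)).card - T.card := Finset.card_sdiff_of_subset hTsub
        _ = (n - (c j0 : ℕ)) - (N - (j0 : ℕ)) := by rw [Fin.card_Ici, hTcard]
    have hN'le : S.card ≤ N - (j0 : ℕ) := by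
      calc S.card ≤ (Finset.Ici j0).card :=
            Finset.card_le_card (fun s hs => Finset.mem_Ici.mpr (hminS s hs))
        _ = N - (j0 : ℕ) := by rw [Fin.card_Ici]
    have hlt' : (c j0 : ℕ) < n := (c j0).isLt
    omega
end
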